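/- The class of fighting fish is closed under augmentation and concatenation: if F is a fighting fish and 1 ≤ i ≤ jaw(F), then ✠_i(F) is a fighting fish; and if F1 and F2 are fighting fish, then F1 ⊙ F2 is a fighting fish. -/

import Mathlib

/-- The four-letter alphabet of steps. -/
inductive Letter : Type
  | E | N | W | S
deriving DecidableEq, Repr

open Letter

/-- Fighting fish: words obtainable from `ENWS` by upper, lower and double gluings. -/
inductive IsFF : List Letter → Prop
  | base : IsFF [E, N, W, S]
  | upper (u v : List Letter) :
      IsFF (u ++ [W] ++ v) → IsFF (u ++ [N, W, S] ++ v)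
  | lower (u v : List Letter) :
      IsFF (u ++ [N] ++ v) → IsFF (u ++ [E, N, W] ++ v)
  | double (u v : List Letter) :
      IsFF (u ++ [W, N] ++ v) → IsFF (u ++ [N, W] ++ v)

/-- Generalized fighting fish: words obtainable from the empty word by the
operations `∇_k` (replace `N^k` by `E N^k W`) and `△_k` (replace `W^k` by `N W^k S`),
for `k ≥ 0`. -/
inductive IsGFF : List Letter → Prop
  | base : IsGFF []
  | nabla (u v : List Letter) (k : ℕ) :
      IsGFF (u ++ List.replicate k N ++ v) →
      IsGFF (u ++ [E] ++ List.replicate k N ++ [W] ++ v)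
  | delta (u v : List Letter) (k : ℕ) :
      IsGFF (u ++ List.replicate k W ++ v) →
      IsGFF (u ++ [N] ++ List.replicate k W ++ [S] ++ v)

/-- The latitude of a word: number of `N`'s minus number of `S`'s. -/
def lat (w : List Letter) : ℤ := (w.count N : ℤ) - (w.count S : ℤ)

/-- The longitude of a word: number of `E`'s minus number of `W`'s. -/
def long (w : List Letter) : ℤ := (w.count E : ℤ) - (w.count W : ℤ)

/-- The size of a word: half its length. -/
def size (w : List Letter) : ℕ := w.length / 2

/-- The jaw of a word: the length of the maximal initial run of `E`'s. -/
def jaw (w : List Letter) : ℕ := (w.takeWhile (· == Letter.E)).length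

/-- The `i`-augmentation of a fighting fish `F = E^{jaw F} · G`:
`✠_i(F) = E^i · N · E^{jaw F − i} · G · S`. -/
def ffAug (w : List Letter) (i : ℕ) : List Letter :=
  List.replicate i Letter.E ++ [Letter.N] ++ List.replicate (jaw w - i) Letter.E ++
    w.drop (jaw w) ++ [Letter.S]

/-- The concatenation of fighting fish `F1 = E^{jaw F1} · N · R` and `F2 = G · S`:
`F1 ⊙ F2 = E^{jaw F1} · G · R`. -/
def ffConc (w1 w2 : List Letter) : List Letter :=
  List.replicate (jaw w1) Letter.E ++ w2.dropLast ++ w1.drop (jaw w1 + 1)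

/-- Locate a non-E letter inside a word of the form `E^a ++ N :: b`. -/
lemma ff_key : ∀ (u : List Letter) (c : Letter) (v : List Letter) (a : ℕ) (b : List Letter),
    u ++ c :: v = List.replicate a E ++ N :: b → c ≠ E →
    (∃ u', u = List.replicate a E ++ N :: u' ∧ b = u' ++ c :: v) ∨
    (u = List.replicate a E ∧ c = N ∧ v = b) := by
  intro u
  induction u with
  | nil =>
    intro c v a b h hc
    cases a with
    | zero =>
      simp at h
      right
      exact ⟨rfl, h.1, h.2⟩
    | succ a =>
      rw [List.replicate_succ] at h
      simp at h
      exact absurd h.1 hc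
  | cons d u ih =>
    intro c v a b h hc
    cases a with
    | zero =>
      simp at h
      left
      exact ⟨u, by simp [h.1], h.2.symm⟩
    | succ a =>
      rw [List.replicate_succ] at h
      simp at h
      obtain ⟨rfl, h2⟩ := h
      rcases ih c v a b h2 hc with ⟨u', hu, hb⟩ | ⟨hu, hc', hv⟩
      · left
        exact ⟨u', by simp [List.replicate_succ, hu], hb⟩
      · right
        exact ⟨by simp [List.replicate_succ, hu], hc', hv⟩

lemma ff_firstN {F : List Letter} (h : IsFF F) :
    ∃ a b, F = List.replicate a E ++ N :: b ∧ 1 ≤ a := by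
  induction h with
  | base => exact ⟨1, [W, S], rfl, le_refl 1⟩
  | upper u v _ ih =>
    obtain ⟨a, b, hF, ha⟩ := ih
    have h' : u ++ W :: v = List.replicate a E ++ N :: b := by simpa using hF
    rcases ff_key u W v a b h' (by simp) with ⟨u', hu, hb⟩ | ⟨_, hc, _⟩
    · exact ⟨a, u' ++ [N, W, S] ++ v, by simp [hu], ha⟩
    · simp at hc
  | lower u v _ ih =>
    obtain ⟨a, b, hF, ha⟩ := ih
    have h' : u ++ N :: v = List.replicate a E ++ N :: b := by simpa using hF
    rcases ff_key u N v a b h' (by simp) with ⟨u', hu, hb⟩ | ⟨hu, _, hv⟩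
    · exact ⟨a, u' ++ [E, N, W] ++ v, by simp [hu], ha⟩
    · refine ⟨a + 1, W :: v, ?_, by omega⟩
      simp [hu, List.replicate_succ' (n := a)]
  | double u v _ ih =>
    obtain ⟨a, b, hF, ha⟩ := ih
    have h' : u ++ W :: (N :: v) = List.replicate a E ++ N :: b := by simpa using hF
    rcases ff_key u W (N :: v) a b h' (by simp) with ⟨u', hu, hb⟩ | ⟨_, hc, _⟩
    · exact ⟨a, u' ++ [N, W] ++ v, by simp [hu], ha⟩
    · simp at hc


lemma ff_last_eq {w : List Letter} {c : Letter} {G : List Letter}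
    (h : w ++ [c] = G ++ [S]) : c = S := by
  have := (List.append_inj' h rfl).2
  simpa using this

lemma ff_lastS {F : List Letter} (h : IsFF F) : ∃ G, F = G ++ [S] := by
  induction h with
  | base => exact ⟨[E, N, W], rfl⟩
  | upper u v _ ih =>
    obtain ⟨G, hG⟩ := ih
    rcases List.eq_nil_or_concat v with rfl | ⟨v0, c, rfl⟩
    · exact ⟨u ++ [N, W], by simp⟩
    · have hc : c = S := ff_last_eq (w := u ++ [W] ++ v0) (by simpa using hG)
      exact ⟨u ++ [N, W, S] ++ v0, by simp [hc]⟩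
  | lower u v _ ih =>
    obtain ⟨G, hG⟩ := ih
    rcases List.eq_nil_or_concat v with rfl | ⟨v0, c, rfl⟩
    · have : N = S := ff_last_eq (w := u) (G := G) (by simpa using hG)
      simp at this
    · have hc : c = S := ff_last_eq (w := u ++ [N] ++ v0) (by simpa using hG)
      exact ⟨u ++ [E, N, W] ++ v0, by simp [hc]⟩
  | double u v _ ih =>
    obtain ⟨G, hG⟩ := ih
    rcases List.eq_nil_or_concat v with rfl | ⟨v0, c, rfl⟩
    · have : N = S := ff_last_eq (w := u ++ [W]) (by simpa using hG)
      simp at this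
    · have hc : c = S := ff_last_eq (w := u ++ [W, N] ++ v0) (by simpa using hG)
      exact ⟨u ++ [N, W] ++ v0, by simp [hc]⟩

lemma ff_uniq : ∀ (a : ℕ) (x : List Letter) (a' : ℕ) (x' : List Letter),
    List.replicate a E ++ N :: x = List.replicate a' E ++ N :: x' → a = a' ∧ x = x' := by
  intro a
  induction a with
  | zero =>
    intro x a' x' h
    cases a' with
    | zero => simp at h; exact ⟨rfl, h⟩
    | succ a' => rw [List.replicate_succ] at h; simp at h
  | succ a ih =>
    intro x a' x' h
    cases a' with
    | zero => rw [List.replicate_succ] at h; simp at h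
    | succ a' =>
      rw [List.replicate_succ, List.replicate_succ] at h
      simp only [List.cons_append, List.cons.injEq] at h
      obtain ⟨h1, h2⟩ := ih x a' x' h.2
      exact ⟨by omega, h2⟩

lemma ff_jaw (a : ℕ) (b : List Letter) : jaw (List.replicate a E ++ N :: b) = a := by
  induction a with
  | zero => simp [jaw]
  | succ a ih =>
    rw [List.replicate_succ, List.cons_append]
    simp only [jaw, List.takeWhile_cons] at ih ⊢
    simp at ih ⊢

lemma ff_drop (a : ℕ) (b : List Letter) :
    (List.replicate a E ++ N :: b).drop a = N :: b := by
  have := List.drop_left (l₁ := List.replicate a E) (l₂ := N :: b)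
  simpa using this

lemma ff_drop1 (a : ℕ) (b : List Letter) :
    (List.replicate a E ++ N :: b).drop (a + 1) = b := by
  rw [← List.drop_drop (i := 1) (j := a), ff_drop]
  simp

lemma ff_concAux {F2 : List Letter} (h : IsFF F2) :
    ∀ G, F2 = G ++ [S] → ∀ P R : List Letter, IsFF (P ++ N :: R) → IsFF (P ++ G ++ R) := by
  induction h with
  | base =>
    intro G hG P R hPR
    have hG' : G = [E, N, W] := by
      have h2 : G ++ [S] = [E, N, W] ++ [S] := by rw [← hG]; rfl
      exact (List.append_inj' h2 rfl).1
    subst hG'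
    have := IsFF.lower P R (by simpa using hPR)
    simpa using this
  | upper u v hsrc ih =>
    intro G hG P R hPR
    obtain ⟨G', hG'⟩ := ff_lastS hsrc
    rcases List.eq_nil_or_concat v with rfl | ⟨v0, c, rfl⟩
    · have : W = S := ff_last_eq (w := u) (G := G') (by simpa using hG')
      simp at this
    · have hc : c = S := ff_last_eq (w := u ++ [W] ++ v0) (by simpa using hG')
      subst hc
      have hGeq : G = u ++ [N, W, S] ++ v0 := by
        have : (u ++ [N, W, S] ++ v0) ++ [S] = G ++ [S] := by simpa using hG
        exact ((List.append_inj' this rfl).1).symm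
      subst hGeq
      have h1 := ih (u ++ [W] ++ v0) (by simp) P R hPR
      have h2 : IsFF ((P ++ u) ++ [W] ++ (v0 ++ R)) := by simpa using h1
      have := IsFF.upper (P ++ u) (v0 ++ R) h2
      simpa using this
  | lower u v hsrc ih =>
    intro G hG P R hPR
    obtain ⟨G', hG'⟩ := ff_lastS hsrc
    rcases List.eq_nil_or_concat v with rfl | ⟨v0, c, rfl⟩
    · have : N = S := ff_last_eq (w := u) (G := G') (by simpa using hG')
      simp at this
    · have hc : c = S := ff_last_eq (w := u ++ [N] ++ v0) (by simpa using hG')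
      subst hc
      have hGeq : G = u ++ [E, N, W] ++ v0 := by
        have : (u ++ [E, N, W] ++ v0) ++ [S] = G ++ [S] := by simpa using hG
        exact ((List.append_inj' this rfl).1).symm
      subst hGeq
      have h1 := ih (u ++ [N] ++ v0) (by simp) P R hPR
      have h2 : IsFF ((P ++ u) ++ [N] ++ (v0 ++ R)) := by simpa using h1
      have := IsFF.lower (P ++ u) (v0 ++ R) h2
      simpa using this
  | double u v hsrc ih =>
    intro G hG P R hPR
    obtain ⟨G', hG'⟩ := ff_lastS hsrc
    rcases List.eq_nil_or_concat v with rfl | ⟨v0, c, rfl⟩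
    · have : N = S := ff_last_eq (w := u ++ [W]) (by simpa using hG')
      simp at this
    · have hc : c = S := ff_last_eq (w := u ++ [W, N] ++ v0) (by simpa using hG')
      subst hc
      have hGeq : G = u ++ [N, W] ++ v0 := by
        have : (u ++ [N, W] ++ v0) ++ [S] = G ++ [S] := by simpa using hG
        exact ((List.append_inj' this rfl).1).symm
      subst hGeq
      have h1 := ih (u ++ [W, N] ++ v0) (by simp) P R hPR
      have h2 : IsFF ((P ++ u) ++ [W, N] ++ (v0 ++ R)) := by simpa using h1
      have := IsFF.double (P ++ u) (v0 ++ R) h2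
      simpa using this

lemma ff_augAux {F : List Letter} (h : IsFF F) :
    ∀ (a : ℕ) (b : List Letter), F = List.replicate a E ++ N :: b →
    ∀ i, 1 ≤ i → i ≤ a →
    IsFF (List.replicate i E ++ N :: (List.replicate (a - i) E ++ N :: (b ++ [S]))) := by
  induction h with
  | base =>
    intro a b hab i h1 hi
    have h' : List.replicate 1 E ++ N :: [W, S] = List.replicate a E ++ N :: b := by
      rw [← hab]; rfl
    obtain ⟨ha, hb⟩ := ff_uniq 1 [W, S] a b h'
    subst hb
    have hia : i = 1 := by omega
    subst hia
    have := IsFF.upper [E, N] [S] (by simpa using IsFF.base)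
    rw [← ha]
    simpa using this
  | upper u v hsrc ih =>
    intro a b hab i h1 hi
    obtain ⟨a', b', hsd, _⟩ := ff_firstN hsrc
    have hsd' : u ++ W :: v = List.replicate a' E ++ N :: b' := by simpa using hsd
    rcases ff_key u W v a' b' hsd' (by simp) with ⟨u', hu, hb'⟩ | ⟨_, hc, _⟩
    · have hres : List.replicate a' E ++ N :: (u' ++ [N, W, S] ++ v)
          = List.replicate a E ++ N :: b := by
        rw [← hab, hu]; simp
      obtain ⟨ha, hb⟩ := ff_uniq a' _ a b hres
      subst hb; subst ha
      have hA := ih a' (u' ++ [W] ++ v) (by rw [hu]; simp) i h1 hi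
      have h2 : IsFF ((List.replicate i E ++ N :: (List.replicate (a' - i) E ++ N :: u'))
          ++ [W] ++ (v ++ [S])) := by simpa using hA
      have := IsFF.upper _ _ h2
      simpa using this
    · simp at hc
  | lower u v hsrc ih =>
    intro a b hab i h1 hi
    obtain ⟨a', b', hsd, ha'1⟩ := ff_firstN hsrc
    have hsd' : u ++ N :: v = List.replicate a' E ++ N :: b' := by simpa using hsd
    rcases ff_key u N v a' b' hsd' (by simp) with ⟨u', hu, hb'⟩ | ⟨hu, _, hv⟩
    · have hres : List.replicate a' E ++ N :: (u' ++ [E, N, W] ++ v)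
          = List.replicate a E ++ N :: b := by
        rw [← hab, hu]; simp
      obtain ⟨ha, hb⟩ := ff_uniq a' _ a b hres
      subst hb; subst ha
      have hA := ih a' (u' ++ [N] ++ v) (by rw [hu]; simp) i h1 hi
      have h2 : IsFF ((List.replicate i E ++ N :: (List.replicate (a' - i) E ++ N :: u'))
          ++ [N] ++ (v ++ [S])) := by simpa using hA
      have := IsFF.lower _ _ h2
      simpa using this
    · -- u = replicate a' E, the glued N is the head N; jaw grows by one
      subst hv
      have hres : List.replicate (a' + 1) E ++ N :: (W :: v)
          = List.replicate a E ++ N :: b := by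
        rw [← hab, hu, List.replicate_succ' (n := a')]; simp
      obtain ⟨ha, hb⟩ := ff_uniq (a' + 1) _ a b hres
      subst hb; subst ha
      rcases Nat.lt_or_ge i (a' + 1) with hlt | hge
      · -- i ≤ a'
        have hia : i ≤ a' := by omega
        have hA := ih a' v (by rw [hu]; simp) i h1 hia
        have h2 : IsFF ((List.replicate i E ++ N :: List.replicate (a' - i) E)
            ++ [N] ++ (v ++ [S])) := by simpa using hA
        have h3 := IsFF.lower _ _ h2
        have hrep : List.replicate (a' + 1 - i) E = List.replicate (a' - i) E ++ [E] := by
          rw [show a' + 1 - i = (a' - i) + 1 from by omega, List.replicate_succ']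
        rw [hrep]
        simpa using h3
      · -- i = a' + 1
        have hia : i = a' + 1 := by omega
        subst hia
        have hA := ih a' v (by rw [hu]; simp) a' ha'1 le_rfl
        have h2 : IsFF (List.replicate a' E ++ [N] ++ (N :: (v ++ [S]))) := by
          simpa using hA
        have h3 := IsFF.lower _ _ h2
        have h4 : IsFF ((List.replicate a' E ++ [E, N]) ++ [W, N] ++ (v ++ [S])) := by
          simpa using h3
        have h5 := IsFF.double _ _ h4
        rw [List.replicate_succ' (n := a')]
        simpa using h5
  | double u v hsrc ih =>
    intro a b hab i h1 hi
    obtain ⟨a', b', hsd, _⟩ := ff_firstN hsrc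
    have hsd' : u ++ W :: (N :: v) = List.replicate a' E ++ N :: b' := by simpa using hsd
    rcases ff_key u W (N :: v) a' b' hsd' (by simp) with ⟨u', hu, hb'⟩ | ⟨_, hc, _⟩
    · have hres : List.replicate a' E ++ N :: (u' ++ [N, W] ++ v)
          = List.replicate a E ++ N :: b := by
        rw [← hab, hu]; simp
      obtain ⟨ha, hb⟩ := ff_uniq a' _ a b hres
      subst hb; subst ha
      have hA := ih a' (u' ++ [W, N] ++ v) (by rw [hu]; simp) i h1 hi
      have h2 : IsFF ((List.replicate i E ++ N :: (List.replicate (a' - i) E ++ N :: u'))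
          ++ [W, N] ++ (v ++ [S])) := by simpa using hA
      have := IsFF.double _ _ h2
      simpa using this
    · simp at hc

/-- Fighting fish are closed under augmentation and concatenation: if `F` is a
fighting fish and `1 ≤ i ≤ jaw F` then `✠_i(F)` is a fighting fish, and if `F1`,
`F2` are fighting fish then `F1 ⊙ F2` is a fighting fish. -/
theorem ff_closure :
    (∀ (F : List Letter) (i : ℕ), IsFF F → 1 ≤ i → i ≤ jaw F → IsFF (ffAug F i)) ∧
    (∀ F1 F2 : List Letter, IsFF F1 → IsFF F2 → IsFF (ffConc F1 F2)) := by
  constructor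
  · intro F i hF h1 hi
    obtain ⟨a, b, hFd, _⟩ := ff_firstN hF
    have hj : jaw F = a := by rw [hFd]; exact ff_jaw a b
    have hdrop : F.drop a = N :: b := by rw [hFd]; exact ff_drop a b
    unfold ffAug
    rw [hj] at hi ⊢
    rw [hdrop]
    have := ff_augAux hF a b hFd i h1 hi
    simpa using this
  · intro F1 F2 h1 h2
    obtain ⟨a, b, hFd, _⟩ := ff_firstN h1
    obtain ⟨G, hG⟩ := ff_lastS h2
    have hj : jaw F1 = a := by rw [hFd]; exact ff_jaw a b
    have hdrop : F1.drop (a + 1) = b := by rw [hFd]; exact ff_drop1 a b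
    have hdl : F2.dropLast = G := by rw [hG]; exact List.dropLast_concat
    unfold ffConc
    rw [hj, hdrop, hdl]
    have := ff_concAux h2 G hG (List.replicate a E) b (by rw [← hFd]; exact h1)
    simpa using this
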